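/- The greedy k-center algorithm is a 2-approximation: if r_{opt}(k) is the minimum over all k-subsets C ⊆ P of max_{p∈P} dist(p,C), then the greedy radius r_k after picking k centers satisfies r_k ≤ 2·r_{opt}(k). -/

import Mathlib

/-- the greedy k-center algorithm is a 2-approximation:
`r_k ≤ 2 · r_opt(k)`, where `r_opt(k)` is the minimum over `k`-subsets `C ⊆ P` of
`max_{p ∈ P} dist(p, C)`. -/
theorem greedy_two_approx {d : ℕ} (P : Finset (EuclideanSpace ℝ (Fin d)))
    (hP : P.Nonempty) (k : ℕ) (hk1 : 1 ≤ k) (hk2 : k ≤ P.card)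
    (c : ℕ → EuclideanSpace ℝ (Fin d)) (hcP : ∀ i, c i ∈ P)
    (hgreedy : ∀ i : ℕ, 1 ≤ i → ∀ p ∈ P,
      Metric.infDist p (c '' Set.Iio i) ≤ Metric.infDist (c i) (c '' Set.Iio i))
    (r : ℕ → ℝ)
    (hr : ∀ i, r i = sSup ((fun p => Metric.infDist p (c '' Set.Iio i)) '' (P : Set _))) :
    r k ≤ 2 * sInf {R : ℝ | ∃ C : Finset (EuclideanSpace ℝ (Fin d)), C ⊆ P ∧
      C.card = k ∧ R = sSup ((fun p => Metric.infDist p (C : Set (EuclideanSpace ℝ (Fin d)))) '' (P : Set _))} := by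
  set δ := Metric.infDist (c k) (c '' Set.Iio k) with hδ
  -- r k ≤ δ
  have hrk : r k ≤ δ := by
    rw [hr k]
    apply csSup_le (hP.to_set.image _)
    rintro x ⟨p, hp, rfl⟩
    exact hgreedy k hk1 p hp
  -- separation of greedy centers
  have hsep : ∀ i j : ℕ, i < j → j ≤ k → δ ≤ dist (c i) (c j) := by
    intro i j hij hjk
    have hj1 : 1 ≤ j := Nat.one_le_iff_ne_zero.mpr (by omega)
    have h1 : Metric.infDist (c j) (c '' Set.Iio j) ≤ dist (c j) (c i) :=
      Metric.infDist_le_dist_of_mem ⟨i, hij, rfl⟩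
    have h2 : Metric.infDist (c k) (c '' Set.Iio j) ≤ Metric.infDist (c j) (c '' Set.Iio j) :=
      hgreedy j hj1 (c k) (hcP k)
    have hne : (c '' Set.Iio j).Nonempty := ⟨c 0, 0, hj1, rfl⟩
    have h3 : δ ≤ Metric.infDist (c k) (c '' Set.Iio j) :=
      Metric.infDist_le_infDist_of_subset
        (Set.image_mono (Set.Iio_subset_Iio hjk)) hne
    rw [dist_comm]
    linarith
  -- main bound for any feasible solution
  have main : ∀ C : Finset (EuclideanSpace ℝ (Fin d)), C ⊆ P → C.card = k →
      r k ≤ 2 * sSup ((fun p => Metric.infDist p (C : Set (EuclideanSpace ℝ (Fin d)))) '' (P : Set _)) := by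
    intro C hCP hCcard
    set R := sSup ((fun p => Metric.infDist p (C : Set (EuclideanSpace ℝ (Fin d)))) '' (P : Set _)) with hR
    have hCne : C.Nonempty := Finset.card_pos.mp (by omega)
    have hbdd : BddAbove ((fun p => Metric.infDist p (C : Set (EuclideanSpace ℝ (Fin d)))) '' (P : Set _)) :=
      (P.finite_toSet.image _).bddAbove
    have hfex : ∀ i : ℕ, ∃ q ∈ C, dist (c i) q ≤ R := by
      intro i
      obtain ⟨q, hq, hqd⟩ := (C.finite_toSet.isCompact).exists_infDist_eq_dist
        (hCne.to_set) (c i)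
      refine ⟨q, hq, ?_⟩
      rw [← hqd]
      exact le_csSup hbdd ⟨c i, hcP i, rfl⟩
    choose f hfC hfd using hfex
    obtain ⟨i, hi, j, hj, hij, hfij⟩ :=
      Finset.exists_ne_map_eq_of_card_lt_of_maps_to
        (s := Finset.range (k + 1)) (t := C)
        (by simp [hCcard]) (fun i _ => hfC i)
    have hik : i ≤ k := by simpa using Nat.lt_succ_iff.mp (Finset.mem_range.mp hi)
    have hjk : j ≤ k := by simpa using Nat.lt_succ_iff.mp (Finset.mem_range.mp hj)
    have hδd : δ ≤ dist (c i) (c j) := by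
      rcases lt_or_gt_of_ne hij with h | h
      · exact hsep i j h hjk
      · rw [dist_comm]; exact hsep j i h hik
    have htri : dist (c i) (c j) ≤ dist (c i) (f i) + dist (f j) (c j) := by
      rw [hfij]
      calc dist (c i) (c j) ≤ dist (c i) (f j) + dist (f j) (c j) := dist_triangle _ _ _
        _ = _ := rfl
    have : dist (c i) (c j) ≤ 2 * R := by
      have := hfd i
      have h2 := hfd j
      rw [dist_comm] at h2
      linarith
    linarith
  -- combine via sInf
  set S := {R : ℝ | ∃ C : Finset (EuclideanSpace ℝ (Fin d)), C ⊆ P ∧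
      C.card = k ∧ R = sSup ((fun p => Metric.infDist p (C : Set (EuclideanSpace ℝ (Fin d)))) '' (P : Set _))} with hS
  obtain ⟨C0, hC0P, hC0card⟩ := Finset.exists_subset_card_eq hk2
  have hSne : S.Nonempty := ⟨_, C0, hC0P, hC0card, rfl⟩
  have hlow : r k / 2 ≤ sInf S := by
    apply le_csInf hSne
    rintro R ⟨C, hCP, hCcard, rfl⟩
    linarith [main C hCP hCcard]
  linarith
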